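/- If u,v are adjacent vertices of G, both of degree exactly 2, with no common neighbor, then mmfvs(G/uv) = mmfvs(G). -/

import Mathlib

open SimpleGraph

def IsFVS {V : Type*} (G : SimpleGraph V) (S : Set V) : Prop :=
  (G.induce Sᶜ).IsAcyclic

def IsMinFVS {V : Type*} (G : SimpleGraph V) (S : Set V) : Prop :=
  IsFVS G S ∧ ∀ T : Set V, T ⊂ S → ¬ IsFVS G T

noncomputable def mmfvs {V : Type*} (G : SimpleGraph V) : ℕ :=
  sSup {k | ∃ S : Set V, IsMinFVS G S ∧ S.ncard = k}

def contract {V : Type*} (G : SimpleGraph V) (u v : V) :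
    SimpleGraph {x : V // x ≠ v} where
  Adj a b := a ≠ b ∧ (G.Adj a.1 b.1 ∨ (a.1 = u ∧ G.Adj v b.1) ∨ (b.1 = u ∧ G.Adj a.1 v))
  symm := by
    constructor
    rintro a b ⟨hab, h | ⟨h1, h2⟩ | ⟨h1, h2⟩⟩
    · exact ⟨hab.symm, Or.inl h.symm⟩
    · exact ⟨hab.symm, Or.inr (Or.inr ⟨h1, h2.symm⟩)⟩
    · exact ⟨hab.symm, Or.inr (Or.inl ⟨h1, h2.symm⟩)⟩
  loopless := by constructor; rintro a ⟨h, -⟩; exact h rfl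


namespace MMFVSAux

open SimpleGraph Walk

variable {A : Type*} {H : SimpleGraph A}

lemma isAcyclic_iff_no_cycle : H.IsAcyclic ↔ ¬ ∃ (x : A) (c : H.Walk x x), c.IsCycle := by
  constructor
  · rintro h ⟨x, c, hc⟩; exact h c hc
  · intro h x c hc; exact h ⟨x, c, hc⟩

/-- transfer a walk into an induced subgraph -/
def toInduce {s : Set A} : ∀ {x y : A} (p : H.Walk x y) (hx : x ∈ s) (hy : y ∈ s)
    (_ : ∀ z ∈ p.support, z ∈ s), (H.induce s).Walk ⟨x, hx⟩ ⟨y, hy⟩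
  | _, _, Walk.nil, _, _, _ => Walk.nil
  | _, _, Walk.cons h p, hx, hy, hp =>
      Walk.cons (by exact h)
        (toInduce p (hp _ (by simp)) hy (fun z hz => hp z (by simp [hz])))

lemma toInduce_map {s : Set A} : ∀ {x y : A} (p : H.Walk x y) (hx : x ∈ s) (hy : y ∈ s)
    (hp : ∀ z ∈ p.support, z ∈ s),
    (toInduce p hx hy hp).map (Embedding.induce (G := H) s).toHom = p
  | _, _, Walk.nil, _, _, _ => rfl
  | _, _, Walk.cons h p, hx, hy, hp => by
      simp only [toInduce, Walk.map_cons, toInduce_map]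
      exact congrArg (Walk.cons h) (toInduce_map p _ hy _)

lemma induce_cycle_up {s : Set A} {x : ↥s} (c : (H.induce s).Walk x x) (hc : c.IsCycle) :
    ∃ (c₂ : H.Walk x.1 x.1), c₂.IsCycle ∧
      ∀ w, w ∈ c₂.support ↔ ∃ z ∈ c.support, z.1 = w := by
  refine ⟨c.map (Embedding.induce (G := H) s).toHom, hc.map (Embedding.induce (G := H) s).injective, ?_⟩
  intro w
  show w ∈ (c.map (Embedding.induce (G := H) s).toHom).support ↔ _
  rw [Walk.support_map]
  constructor
  · intro hw
    obtain ⟨z, hz, hzw⟩ := List.mem_map.1 hw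
    exact ⟨z, hz, hzw⟩
  · rintro ⟨z, hz, rfl⟩
    exact List.mem_map_of_mem hz

lemma induce_cycle_down {s : Set A} {x : A} (c : H.Walk x x) (hc : c.IsCycle)
    (hs : ∀ z ∈ c.support, z ∈ s) :
    ∃ (c' : (H.induce s).Walk ⟨x, hs x c.start_mem_support⟩ ⟨x, hs x c.start_mem_support⟩),
      c'.IsCycle ∧ ∀ z ∈ c'.support, z.1 ∈ c.support := by
  refine ⟨toInduce c (hs x c.start_mem_support) (hs x c.start_mem_support) hs, ?_, ?_⟩
  · rw [← Walk.map_isCycle_iff_of_injective (f := (Embedding.induce (G := H) s).toHom)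
      (Embedding.induce (G := H) s).injective, toInduce_map]
    exact hc
  · intro z hz
    have h := congrArg Walk.support (toInduce_map c (hs x c.start_mem_support)
      (hs x c.start_mem_support) hs)
    rw [Walk.support_map] at h
    have h2 := List.mem_map_of_mem (f := ⇑(Embedding.induce (G := H) s).toHom) hz
    rw [h] at h2
    exact h2

lemma List_mem_concat {α : Type*} {z x : α} {l : List α} :
    z ∈ l.concat x ↔ z ∈ l ∨ z = x := by simp

lemma concat_isPath {x y w : A} {p : H.Walk x y} (hp : p.IsPath) (hw : w ∉ p.support)
    (h : H.Adj y w) : (p.concat h).IsPath := by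
  rw [← Walk.isPath_reverse_iff, Walk.reverse_concat, Walk.cons_isPath_iff]
  refine ⟨hp.reverse, ?_⟩
  rw [Walk.support_reverse]
  simpa using hw

lemma cycle_decomp {u : A} {c : H.Walk u u} (hc : c.IsCycle) :
    ∃ (x y : A) (r : H.Walk x y), H.Adj u x ∧ H.Adj y u ∧ r.IsPath ∧ u ∉ r.support ∧
      x ≠ y ∧ ∀ z, z ∈ c.support ↔ (z = u ∨ z ∈ r.support) := by
  have h3 := hc.three_le_length
  cases c with
  | nil => simp at hc
  | @cons _ w _ h q =>
    rw [Walk.cons_isCycle_iff] at hc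
    have hq : q.IsPath := hc.1
    have hwu : u ≠ w := h.ne
    obtain ⟨y, huy, r, hr⟩ := Walk.exists_eq_cons_of_ne hwu q.reverse
    have hqrev : q.reverse.IsPath := hq.reverse
    rw [hr, Walk.cons_isPath_iff] at hqrev
    have hrlen : 1 ≤ r.length := by
      have h1 : q.reverse.length = q.length := q.length_reverse
      rw [hr] at h1
      simp only [Walk.length_cons] at h1 h3 ⊢
      omega
    refine ⟨w, y, r.reverse, h, huy.symm, hqrev.1.reverse, ?_, ?_, ?_⟩
    · rw [Walk.support_reverse]
      simpa using hqrev.2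
    · rintro rfl
      have : r = Walk.nil := by
        have := SimpleGraph.Path.loop_eq ⟨r, hqrev.1⟩
        simpa using congrArg Subtype.val this
      rw [this] at hrlen
      simp at hrlen
    · intro z
      have hmq : z ∈ q.support ↔ z ∈ q.reverse.support := by
        rw [Walk.support_reverse, List.mem_reverse]
      rw [Walk.support_cons, List.mem_cons, hmq, hr, Walk.support_cons, List.mem_cons,
        Walk.support_reverse, List.mem_reverse]
      tauto

lemma mem_support_cycle_tail {x z : A} {c : H.Walk x x} (hc : c.IsCycle) :
    z ∈ c.support ↔ z ∈ c.support.tail := by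
  cases c with
  | nil => simp at hc
  | cons h q =>
    rw [Walk.support_cons]
    simp only [List.tail_cons, List.mem_cons]
    constructor
    · rintro (rfl | hz)
      · exact q.end_mem_support
      · exact hz
    · exact Or.inr

lemma mem_support_rotate [DecidableEq A] {x w z : A} {c : H.Walk x x} (hc : c.IsCycle) (hw : w ∈ c.support) :
    z ∈ (c.rotate w hw).support ↔ z ∈ c.support := by
  rw [mem_support_cycle_tail (hc.rotate hw), mem_support_cycle_tail hc]
  exact (Walk.support_rotate c w hw).mem_iff

lemma cycle_two_nbrs [DecidableEq A] {x₀ w p q : A} {c : H.Walk x₀ x₀} (hc : c.IsCycle) (hw : w ∈ c.support)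
    (hN : ∀ z, H.Adj w z → z = p ∨ z = q) : p ∈ c.support ∧ q ∈ c.support := by
  have hc' := hc.rotate hw
  obtain ⟨x, y, r, h1, h2, _, _, hxy, hsupp⟩ := cycle_decomp hc'
  have hx : x ∈ c.support := by
    rw [← mem_support_rotate hc hw, hsupp]
    exact Or.inr r.start_mem_support
  have hy : y ∈ c.support := by
    rw [← mem_support_rotate hc hw, hsupp]
    exact Or.inr r.end_mem_support
  rcases hN x h1 with rfl | rfl <;> rcases hN y h2.symm with rfl | rfl
  · exact absurd rfl hxy
  · exact ⟨hx, hy⟩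
  · exact ⟨hy, hx⟩
  · exact absurd rfl hxy

lemma walk_avoid {w : A} (hw : ∀ z, ¬ H.Adj w z) :
    ∀ {x y : A} (p : H.Walk x y), x ≠ w → ∀ z ∈ p.support, z ≠ w := by
  intro x y p
  induction p with
  | nil => intro hx z hz; rw [Walk.support_nil, List.mem_singleton] at hz; exact hz ▸ hx
  | @cons x₁ x₂ _ h p ih =>
    intro hx z hz
    rw [Walk.support_cons, List.mem_cons] at hz
    rcases hz with rfl | hz
    · exact hx
    · refine ih ?_ z hz
      rintro rfl
      exact hw x₁ h.symm

lemma cycle_avoid {w : A} (hw : ∀ z, ¬ H.Adj w z) {x : A} {c : H.Walk x x}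
    (hc : c.IsCycle) : ∀ z ∈ c.support, z ≠ w := by
  cases c with
  | nil => simp at hc
  | @cons _ x₂ _ h q =>
    have hx : x ≠ w := by rintro rfl; exact hw x₂ h
    intro z hz
    rw [Walk.support_cons, List.mem_cons] at hz
    rcases hz with rfl | hz
    · exact hx
    · refine walk_avoid hw q ?_ z hz
      rintro rfl
      exact hw _ h.symm

lemma isFVS_iff_cycles {S : Set A} :
    IsFVS H S ↔ ∀ (x : A) (c : H.Walk x x), c.IsCycle → ∃ z ∈ c.support, z ∈ S := by
  constructor
  · intro hA x c hc
    by_contra hno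
    push_neg at hno
    obtain ⟨c', hc', -⟩ := induce_cycle_down (s := Sᶜ) c hc hno
    exact hA c' hc'
  · intro h x c hc
    obtain ⟨c₂, hc₂, hsupp⟩ := induce_cycle_up c hc
    obtain ⟨z, hz, hzS⟩ := h _ c₂ hc₂
    obtain ⟨z', hz', rfl⟩ := (hsupp z).1 hz
    exact z'.2 hzS

lemma isFVS_mono {S T : Set A} (hST : S ⊆ T) (h : IsFVS H S) : IsFVS H T := by
  rw [isFVS_iff_cycles] at h ⊢
  intro x c hc
  obtain ⟨z, hz, hzS⟩ := h x c hc
  exact ⟨z, hz, hST hzS⟩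

lemma isMinFVS_iff {S : Set A} :
    IsMinFVS H S ↔ IsFVS H S ∧ ∀ x ∈ S, ¬ IsFVS H (S \ {x}) := by
  constructor
  · rintro ⟨h1, h2⟩
    exact ⟨h1, fun x hx => h2 _ (Set.sdiff_singleton_ssubset.2 hx)⟩
  · rintro ⟨h1, h2⟩
    refine ⟨h1, fun T hT hTfvs => ?_⟩
    obtain ⟨x, hxS, hxT⟩ := Set.exists_of_ssubset hT
    refine h2 x hxS (isFVS_mono ?_ hTfvs)
    intro z hz
    exact ⟨hT.1 hz, by rintro rfl; exact hxT hz⟩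

lemma exists_isMinFVS [Finite A] (H : SimpleGraph A) : ∃ S, IsMinFVS H S := by
  have huniv : IsFVS H (Set.univ) := by
    intro x c hc
    exact absurd x.2 (by simp)
  have hne : Set.Nonempty {n | ∃ S : Set A, IsFVS H S ∧ S.ncard = n} :=
    ⟨_, Set.univ, huniv, rfl⟩
  obtain ⟨S, hS, hcard⟩ := Nat.sInf_mem hne
  refine ⟨S, hS, fun T hT hTfvs => ?_⟩
  have h1 : T.ncard < S.ncard := Set.ncard_lt_ncard hT S.toFinite
  have h2 : sInf {n | ∃ S : Set A, IsFVS H S ∧ S.ncard = n} ≤ T.ncard :=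
    Nat.sInf_le ⟨T, hTfvs, rfl⟩
  omega

variable {V : Type*}

/-- The contraction graph realized on the original vertex type, with `v` isolated. -/
def G2 (G : SimpleGraph V) (u v : V) : SimpleGraph V where
  Adj x y := x ≠ y ∧ x ≠ v ∧ y ≠ v ∧
    (G.Adj x y ∨ (x = u ∧ G.Adj v y) ∨ (y = u ∧ G.Adj x v))
  symm := by
    constructor
    rintro x y ⟨h1, h2, h3, h | ⟨h4, h5⟩ | ⟨h4, h5⟩⟩
    · exact ⟨h1.symm, h3, h2, Or.inl h.symm⟩
    · exact ⟨h1.symm, h3, h2, Or.inr (Or.inr ⟨h4, h5.symm⟩)⟩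
    · exact ⟨h1.symm, h3, h2, Or.inr (Or.inl ⟨h4, h5.symm⟩)⟩
  loopless := by constructor; rintro x ⟨h, -⟩; exact h rfl

lemma G2_not_adj_v (G : SimpleGraph V) (u v : V) : ∀ z, ¬ (G2 G u v).Adj v z := by
  rintro z ⟨-, h2, -, -⟩
  exact h2 rfl

lemma contract_eq_induce (G : SimpleGraph V) (u v : V) :
    contract G u v = (G2 G u v).induce {x | x ≠ v} := by
  ext a b
  show (a ≠ b ∧ _) ↔ (G2 G u v).Adj a.1 b.1
  constructor
  · rintro ⟨h1, h2⟩
    exact ⟨fun h => h1 (Subtype.ext h), a.2, b.2, h2⟩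
  · rintro ⟨h1, -, -, h2⟩
    exact ⟨fun h => h1 (congrArg Subtype.val h), h2⟩

lemma isFVS_contract_iff (G : SimpleGraph V) (u v : V) {S' : Set {x : V // x ≠ v}} :
    IsFVS (contract G u v) S' ↔
      ∀ (y : V) (c₂ : (G2 G u v).Walk y y), c₂.IsCycle →
        ∃ z ∈ c₂.support, z ∈ Subtype.val '' S' := by
  rw [show (contract G u v) = (G2 G u v).induce {x | x ≠ v} from contract_eq_induce G u v]
  constructor
  · intro hA y c₂ hc₂
    by_contra hno
    push_neg at hno
    have hs : ∀ z ∈ c₂.support, z ∈ {x | x ≠ v} :=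
      fun z hz => cycle_avoid (G2_not_adj_v G u v) hc₂ z hz
    obtain ⟨c', hc', hsupp⟩ := induce_cycle_down (s := {x | x ≠ v}) c₂ hc₂ hs
    rw [isFVS_iff_cycles] at hA
    obtain ⟨z, hz, hzS⟩ := hA _ c' hc'
    exact hno z.1 (hsupp z hz) ⟨z, hzS, rfl⟩
  · intro h
    rw [isFVS_iff_cycles]
    intro x c hc
    obtain ⟨c₂, hc₂, hsupp⟩ := induce_cycle_up c hc
    obtain ⟨z, hz, hzM⟩ := h _ c₂ hc₂
    obtain ⟨z', hz', rfl⟩ := (hsupp z).1 hz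
    obtain ⟨z'', hz''S, hval⟩ := hzM
    have : z'' = z' := Subtype.ext hval
    exact ⟨z', hz', this ▸ hz''S⟩

section ProjLift

variable [DecidableEq V] {G : SimpleGraph V} {u v a b : V}

lemma proj (huv : G.Adj u v) (hNu : ∀ z, G.Adj u z ↔ z = v ∨ z = a)
    (hNv : ∀ z, G.Adj v z ↔ z = u ∨ z = b)
    (hav : a ≠ v) (hau : a ≠ u) (hbu : b ≠ u) (hbv : b ≠ v) (hab : a ≠ b)
    {x : V} (c : G.Walk x x) (hc : c.IsCycle) :
    ∃ (y : V) (c₂ : (G2 G u v).Walk y y), c₂.IsCycle ∧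
      ∀ z ∈ c₂.support, z ∈ c.support ∧ z ≠ v := by
  have huv' : u ≠ v := huv.ne
  by_cases hu : u ∈ c.support
  · have hc' := hc.rotate hu
    obtain ⟨x₁, y₁, r, h1, h2, hrpath, hur, hxy, hsupp⟩ := cycle_decomp hc'
    have key : ∃ r' : G.Walk v a, r'.IsPath ∧ u ∉ r'.support ∧
        ∀ z ∈ r'.support, z ∈ c.support := by
      rcases (hNu x₁).1 h1 with rfl | rfl
      · rcases (hNu y₁).1 h2.symm with rfl | rfl
        · exact absurd rfl hxy
        · exact ⟨r, hrpath, hur,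
            fun z hz => (mem_support_rotate hc hu).1 ((hsupp z).2 (Or.inr hz))⟩
      · rcases (hNu y₁).1 h2.symm with rfl | rfl
        · refine ⟨r.reverse, hrpath.reverse, ?_, fun z hz => ?_⟩
          · rw [Walk.support_reverse, List.mem_reverse]; exact hur
          · rw [Walk.support_reverse, List.mem_reverse] at hz
            exact (mem_support_rotate hc hu).1 ((hsupp z).2 (Or.inr hz))
        · exact absurd rfl hxy
    obtain ⟨r', hr'path, hur', hsub⟩ := key
    have hva : (v : V) ≠ a := fun h => hav h.symm
    obtain ⟨z₂, hvz₂, r₂, hr₂eq⟩ := Walk.exists_eq_cons_of_ne hva r'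
    have hz₂b : z₂ = b := by
      rcases (hNv z₂).1 hvz₂ with rfl | rfl
      · exact absurd (by
          rw [hr₂eq, Walk.support_cons]
          exact List.mem_cons_of_mem _ r₂.start_mem_support) hur'
      · rfl
    have hz₂b' := hz₂b.symm
    subst hz₂b'
    have hr'cons := hr'path
    rw [hr₂eq, Walk.cons_isPath_iff] at hr'cons
    have hur₂ : u ∉ r₂.support := fun h => hur' (by
      rw [hr₂eq, Walk.support_cons]; exact List.mem_cons_of_mem _ h)
    have hsub₂ : ∀ z ∈ r₂.support, z ∈ c.support := fun z hz => hsub z (by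
      rw [hr₂eq, Walk.support_cons]; exact List.mem_cons_of_mem _ hz)
    have hedge : ∀ e ∈ r₂.edges, e ∈ (G2 G u v).edgeSet := by
      intro e he
      revert he
      refine e.ind ?_
      intro p q he
      have hadj := r₂.adj_of_mem_edges he
      have hp := r₂.fst_mem_support_of_mem_edges he
      have hq := r₂.snd_mem_support_of_mem_edges he
      rw [SimpleGraph.mem_edgeSet]
      exact ⟨hadj.ne, fun h => hr'cons.2 (h ▸ hp), fun h => hr'cons.2 (h ▸ hq), Or.inl hadj⟩
    have hG2ub : (G2 G u v).Adj u b :=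
      ⟨fun h => hbu h.symm, huv', hbv, Or.inr (Or.inl ⟨rfl, (hNv b).2 (Or.inr rfl)⟩)⟩
    have hG2au : (G2 G u v).Adj a u :=
      ⟨hau, hav, huv', Or.inl ((hNu a).2 (Or.inr rfl)).symm⟩
    refine ⟨u, Walk.cons hG2ub ((r₂.transfer (G2 G u v) hedge).concat hG2au), ?_, ?_⟩
    · rw [Walk.cons_isCycle_iff]
      constructor
      · refine concat_isPath (hr'cons.1.transfer hedge) ?_ hG2au
        rw [Walk.support_transfer]
        exact hur₂
      · rw [Walk.edges_concat, Walk.edges_transfer]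
        intro hmem
        rcases List_mem_concat.1 hmem with hmem | hmem
        · exact hur₂ (r₂.fst_mem_support_of_mem_edges hmem)
        · rw [Sym2.eq_iff] at hmem
          rcases hmem with ⟨h1, -⟩ | ⟨-, h2⟩
          · exact hau h1.symm
          · exact hab h2.symm
    · intro z hz
      rw [Walk.support_cons, List.mem_cons] at hz
      rcases hz with rfl | hz
      · exact ⟨hu, huv'⟩
      · rw [Walk.support_concat, Walk.support_transfer] at hz
        rcases (List.mem_append.1 hz).imp_right List.mem_singleton.1 with hz | rfl
        · exact ⟨hsub₂ z hz, fun h => hr'cons.2 (h ▸ hz)⟩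
        · exact ⟨hu, huv'⟩
  · have hvns : v ∉ c.support := fun hvmem =>
      hu (cycle_two_nbrs hc hvmem (fun z hz => (hNv z).1 hz)).1
    have hedge : ∀ e ∈ c.edges, e ∈ (G2 G u v).edgeSet := by
      intro e he
      revert he
      refine e.ind ?_
      intro p q he
      have hadj := c.adj_of_mem_edges he
      have hp := c.fst_mem_support_of_mem_edges he
      have hq := c.snd_mem_support_of_mem_edges he
      rw [SimpleGraph.mem_edgeSet]
      exact ⟨hadj.ne, fun h => hvns (h ▸ hp), fun h => hvns (h ▸ hq), Or.inl hadj⟩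
    refine ⟨x, c.transfer _ hedge, hc.transfer hedge, ?_⟩
    intro z hz
    rw [Walk.support_transfer] at hz
    exact ⟨hz, fun h => hvns (h ▸ hz)⟩

lemma lift (huv : G.Adj u v) (hNu : ∀ z, G.Adj u z ↔ z = v ∨ z = a)
    (hNv : ∀ z, G.Adj v z ↔ z = u ∨ z = b)
    (hav : a ≠ v) (hau : a ≠ u) (hbu : b ≠ u) (hbv : b ≠ v) (hab : a ≠ b)
    {y : V} (c₂ : (G2 G u v).Walk y y) (hc₂ : c₂.IsCycle) :
    ∃ (x : V) (c : G.Walk x x), c.IsCycle ∧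
      ∀ z ∈ c.support, z ∈ c₂.support ∨ (z = v ∧ u ∈ c₂.support) := by
  have huv' : u ≠ v := huv.ne
  by_cases hu : u ∈ c₂.support
  · have hc' := hc₂.rotate hu
    obtain ⟨x₁, y₁, r, h1, h2, hrpath, hur, hxy, hsupp⟩ := cycle_decomp hc'
    have hN2 : ∀ z, (G2 G u v).Adj u z → z = a ∨ z = b := by
      rintro z ⟨h1', h2', h3', h4' | ⟨-, h5'⟩ | ⟨h6', -⟩⟩
      · rcases (hNu z).1 h4' with rfl | rfl
        · exact absurd rfl h3'
        · exact Or.inl rfl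
      · rcases (hNv z).1 h5' with rfl | rfl
        · exact absurd rfl (Ne.symm h1')
        · exact Or.inr rfl
      · exact absurd h6'.symm h1'
    have key : ∃ r' : (G2 G u v).Walk a b, r'.IsPath ∧ u ∉ r'.support ∧
        ∀ z ∈ r'.support, z ∈ c₂.support := by
      rcases hN2 x₁ h1 with rfl | rfl
      · rcases hN2 y₁ h2.symm with rfl | rfl
        · exact absurd rfl hxy
        · exact ⟨r, hrpath, hur,
            fun z hz => (mem_support_rotate hc₂ hu).1 ((hsupp z).2 (Or.inr hz))⟩
      · rcases hN2 y₁ h2.symm with rfl | rfl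
        · refine ⟨r.reverse, hrpath.reverse, ?_, fun z hz => ?_⟩
          · rw [Walk.support_reverse, List.mem_reverse]; exact hur
          · rw [Walk.support_reverse, List.mem_reverse] at hz
            exact (mem_support_rotate hc₂ hu).1 ((hsupp z).2 (Or.inr hz))
        · exact absurd rfl hxy
    obtain ⟨r', hr'path, hur', hsub⟩ := key
    have hvr' : ∀ z ∈ r'.support, z ≠ v := walk_avoid (G2_not_adj_v G u v) r' hav
    have hedge : ∀ e ∈ r'.edges, e ∈ G.edgeSet := by
      intro e he
      revert he
      refine e.ind ?_
      intro p q he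
      have hp := r'.fst_mem_support_of_mem_edges he
      have hq := r'.snd_mem_support_of_mem_edges he
      rcases r'.adj_of_mem_edges he with ⟨-, -, -, h4' | ⟨h5', -⟩ | ⟨h5', -⟩⟩
      · exact h4'
      · exact absurd h5' (fun h => hur' (h ▸ hp))
      · exact absurd h5' (fun h => hur' (h ▸ hq))
    have hadj_ua : G.Adj u a := (hNu a).2 (Or.inr rfl)
    have hadj_bv : G.Adj b v := ((hNv b).2 (Or.inr rfl)).symm
    have hadj_vu : G.Adj v u := huv.symm
    have hurG : u ∉ (r'.transfer G hedge).support := by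
      rw [Walk.support_transfer]; exact hur'
    have hvrG : v ∉ (r'.transfer G hedge).support := by
      rw [Walk.support_transfer]
      intro h
      exact hvr' v h rfl
    refine ⟨u, Walk.cons hadj_ua
      (((r'.transfer G hedge).concat hadj_bv).concat hadj_vu), ?_, ?_⟩
    · rw [Walk.cons_isCycle_iff]
      constructor
      · refine concat_isPath (concat_isPath (hr'path.transfer hedge) hvrG hadj_bv) ?_ hadj_vu
        rw [Walk.support_concat]
        intro h
        rcases (List.mem_append.1 h).imp_right List.mem_singleton.1 with h | h
        · exact hurG h
        · exact huv' h
      · rw [Walk.edges_concat, Walk.edges_concat, Walk.edges_transfer]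
        intro hmem
        rcases List_mem_concat.1 hmem with hmem | hmem
        · rcases List_mem_concat.1 hmem with hmem | hmem
          · exact hur' (r'.fst_mem_support_of_mem_edges hmem)
          · rw [Sym2.eq_iff] at hmem
            rcases hmem with ⟨h1', -⟩ | ⟨h1', -⟩
            · exact hbu h1'.symm
            · exact huv' h1'
        · rw [Sym2.eq_iff] at hmem
          rcases hmem with ⟨h1', -⟩ | ⟨-, h2'⟩
          · exact huv' h1'
          · exact hav h2'
    · intro z hz
      rw [Walk.support_cons, List.mem_cons] at hz
      rcases hz with rfl | hz
      · exact Or.inl hu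
      · rw [Walk.support_concat] at hz
        rcases (List.mem_append.1 hz).imp_right List.mem_singleton.1 with hz | rfl
        · rw [Walk.support_concat, Walk.support_transfer] at hz
          rcases (List.mem_append.1 hz).imp_right List.mem_singleton.1 with hz | rfl
          · exact Or.inl (hsub z hz)
          · exact Or.inr ⟨rfl, hu⟩
        · exact Or.inl hu
  · have hedge : ∀ e ∈ c₂.edges, e ∈ G.edgeSet := by
      intro e he
      revert he
      refine e.ind ?_
      intro p q he
      have hp := c₂.fst_mem_support_of_mem_edges he
      have hq := c₂.snd_mem_support_of_mem_edges he
      rcases c₂.adj_of_mem_edges he with ⟨-, -, -, h4' | ⟨h5', -⟩ | ⟨h5', -⟩⟩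
      · exact h4'
      · exact absurd h5' (fun h => hu (h ▸ hp))
      · exact absurd h5' (fun h => hu (h ▸ hq))
    refine ⟨y, c₂.transfer G hedge, hc₂.transfer hedge, ?_⟩
    intro z hz
    rw [Walk.support_transfer] at hz
    exact Or.inl hz

end ProjLift

end MMFVSAux


theorem mmfvs_contract_degree_two {V : Type*} [Fintype V] [DecidableEq V]
    (G : SimpleGraph V) (u v : V) (huv : G.Adj u v)
    (hu : (G.neighborSet u).ncard = 2) (hv : (G.neighborSet v).ncard = 2)
    (hcommon : G.neighborSet u ∩ G.neighborSet v = ∅) :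
    mmfvs (contract G u v) = mmfvs G := by
  classical
  obtain ⟨p, q, hpq, hNuset⟩ := Set.ncard_eq_two.mp hu
  obtain ⟨p', q', hpq', hNvset⟩ := Set.ncard_eq_two.mp hv
  have hmemNu : ∀ z, G.Adj u z ↔ z = p ∨ z = q := by
    intro z
    rw [← SimpleGraph.mem_neighborSet, hNuset]
    simp [Set.mem_insert_iff]
  have hmemNv : ∀ z, G.Adj v z ↔ z = p' ∨ z = q' := by
    intro z
    rw [← SimpleGraph.mem_neighborSet, hNvset]
    simp [Set.mem_insert_iff]
  obtain ⟨a, hav, hNu⟩ : ∃ a, a ≠ v ∧ ∀ z, G.Adj u z ↔ z = v ∨ z = a := by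
    rcases (hmemNu v).1 huv with rfl | rfl
    · exact ⟨q, Ne.symm hpq, fun z => hmemNu z⟩
    · exact ⟨p, hpq, fun z => (hmemNu z).trans or_comm⟩
  obtain ⟨b, hbu, hNv⟩ : ∃ b, b ≠ u ∧ ∀ z, G.Adj v z ↔ z = u ∨ z = b := by
    rcases (hmemNv u).1 huv.symm with rfl | rfl
    · exact ⟨q', Ne.symm hpq', fun z => hmemNv z⟩
    · exact ⟨p', hpq', fun z => (hmemNv z).trans or_comm⟩
  have hadj_ua : G.Adj u a := (hNu a).2 (Or.inr rfl)
  have hadj_vb : G.Adj v b := (hNv b).2 (Or.inr rfl)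
  have hau : a ≠ u := hadj_ua.ne'
  have hbv : b ≠ v := hadj_vb.ne'
  have hab : a ≠ b := by
    rintro rfl
    have h : a ∈ G.neighborSet u ∩ G.neighborSet v := ⟨hadj_ua, hadj_vb⟩
    rw [hcommon] at h
    exact h
  have huv' : u ≠ v := huv.ne
  have projL := fun {x : V} (c : G.Walk x x) (hc : c.IsCycle) =>
    MMFVSAux.proj huv hNu hNv hav hau hbu hbv hab c hc
  have liftL := fun {y : V} (c₂ : (MMFVSAux.G2 G u v).Walk y y) (hc₂ : c₂.IsCycle) =>
    MMFVSAux.lift huv hNu hNv hav hau hbu hbv hab c₂ hc₂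
  have hG2avoid : ∀ {y : V} (c₂ : (MMFVSAux.G2 G u v).Walk y y), c₂.IsCycle →
      ∀ z ∈ c₂.support, z ≠ v := fun c₂ hc₂ =>
    MMFVSAux.cycle_avoid (MMFVSAux.G2_not_adj_v G u v) hc₂
  have himg : ∀ W : Set V, v ∉ W →
      Subtype.val '' (Subtype.val ⁻¹' W : Set {x : V // x ≠ v}) = W := by
    intro W hvW
    rw [Set.image_preimage_eq_inter_range, Subtype.range_coe_subtype]
    ext z
    simp only [Set.mem_inter_iff, Set.mem_setOf_eq]
    exact ⟨fun h => h.1, fun h => ⟨h, fun hzv => hvW (hzv ▸ h)⟩⟩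
  have hdiffimg : ∀ (S' : Set {x : V // x ≠ v}) (z₀ : {x : V // x ≠ v}),
      Subtype.val '' (S' \ {z₀}) = (Subtype.val '' S') \ {z₀.1} := by
    intro S' z₀
    rw [Set.image_diff Subtype.val_injective, Set.image_singleton]
  have hKeq : {k | ∃ S : Set {x : V // x ≠ v}, IsMinFVS (contract G u v) S ∧ S.ncard = k}
            = {k | ∃ S : Set V, IsMinFVS G S ∧ S.ncard = k} := by
    ext k
    simp only [Set.mem_setOf_eq]
    constructor
    · rintro ⟨S', hmin', rfl⟩
      refine ⟨Subtype.val '' S', ?_, Set.ncard_image_of_injective _ Subtype.val_injective⟩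
      rw [MMFVSAux.isMinFVS_iff] at hmin' ⊢
      obtain ⟨hfvs', hmin'⟩ := hmin'
      have hvS : v ∉ Subtype.val '' S' := by
        rintro ⟨z, -, hzv⟩
        exact z.2 hzv
      constructor
      · rw [MMFVSAux.isFVS_iff_cycles]
        intro x c hc
        obtain ⟨y, c₂, hc₂, hsup⟩ := projL c hc
        obtain ⟨z, hz, hzM⟩ := (MMFVSAux.isFVS_contract_iff G u v).1 hfvs' y c₂ hc₂
        exact ⟨z, (hsup z hz).1, hzM⟩
      · intro x hx
        obtain ⟨z₀, hz₀S, rfl⟩ := hx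
        rw [MMFVSAux.isFVS_iff_cycles]
        intro hcon
        have hnot := hmin' z₀ hz₀S
        rw [MMFVSAux.isFVS_contract_iff] at hnot
        push_neg at hnot
        obtain ⟨y, c₂, hc₂, hc₂avoid⟩ := hnot
        obtain ⟨x', c, hc, hsup⟩ := liftL c₂ hc₂
        obtain ⟨z, hzc, hzmem⟩ := hcon x' c hc
        rcases hsup z hzc with hz | ⟨rfl, -⟩
        · refine hc₂avoid z hz ?_
          rw [hdiffimg]
          exact hzmem
        · exact hvS hzmem.1
    · rintro ⟨S, hmin, rfl⟩
      rw [MMFVSAux.isMinFVS_iff] at hmin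
      obtain ⟨hfvs, hminS⟩ := hmin
      have hfvsC := hfvs
      rw [MMFVSAux.isFVS_iff_cycles] at hfvsC
      have claimA : v ∈ S → u ∉ S := by
        intro hvS huS
        have hnot := hminS u huS
        rw [MMFVSAux.isFVS_iff_cycles] at hnot
        push_neg at hnot
        obtain ⟨x, c, hc, havoid⟩ := hnot
        have huc : u ∈ c.support := by
          by_contra huc
          obtain ⟨z, hz, hzS⟩ := hfvsC x c hc
          refine havoid z hz ⟨hzS, fun h => huc ?_⟩
          rw [Set.mem_singleton_iff] at h
          exact h ▸ hz
        have hvc : v ∈ c.support :=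
          (MMFVSAux.cycle_two_nbrs hc huc (fun z hz => (hNu z).1 hz)).1
        refine havoid v hvc ⟨hvS, fun h => ?_⟩
        rw [Set.mem_singleton_iff] at h
        exact huv' h.symm
      by_cases hvS : v ∈ S
      · -- v ∈ S, u ∉ S : use T = (S \ {v}) ∪ {u}
        have huS : u ∉ S := claimA hvS
        set T : Set V := (S \ {v}) ∪ {u} with hT
        have hvT : v ∉ T := by
          rintro (⟨-, h⟩ | h)
          · exact h rfl
          · exact huv' (Set.mem_singleton_iff.1 h).symm
        have huT : u ∈ T := Or.inr rfl
        refine ⟨Subtype.val ⁻¹' T, ?_, ?_⟩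
        · rw [MMFVSAux.isMinFVS_iff]
          constructor
          · rw [MMFVSAux.isFVS_contract_iff, himg T hvT]
            intro y c₂ hc₂
            by_contra hno
            push_neg at hno
            have huc₂ : u ∉ c₂.support := fun h => hno u h huT
            obtain ⟨x', c, hc, hsup⟩ := liftL c₂ hc₂
            obtain ⟨z, hzc, hzS⟩ := hfvsC x' c hc
            rcases hsup z hzc with hz | ⟨rfl, hu'⟩
            · have hzT : z ∉ T := hno z hz
              have hznv : z ≠ v := hG2avoid c₂ hc₂ z hz
              exact hzT (Or.inl ⟨hzS, fun h => hznv (Set.mem_singleton_iff.1 h)⟩)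
            · exact huc₂ hu'
          · intro x' hx'
            rw [MMFVSAux.isFVS_contract_iff, hdiffimg, himg T hvT]
            intro hcon
            have hx'T : x'.1 ∈ T := hx'
            rcases hx'T with ⟨hx'S, -⟩ | hx'u
            · -- x'.1 ∈ S \ {v}
              have hnot := hminS x'.1 hx'S
              rw [MMFVSAux.isFVS_iff_cycles] at hnot
              push_neg at hnot
              obtain ⟨x₀, c, hc, havoid⟩ := hnot
              have hx'nv : x'.1 ≠ v := x'.2
              have hvc : v ∉ c.support := fun h =>
                havoid v h ⟨hvS, fun hh => hx'nv (Set.mem_singleton_iff.1 hh).symm⟩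
              have huc : u ∉ c.support := fun h =>
                hvc (MMFVSAux.cycle_two_nbrs hc h (fun z hz => (hNu z).1 hz)).1
              obtain ⟨y, c₂, hc₂, hsup⟩ := projL c hc
              obtain ⟨z, hz, hzmem⟩ := hcon y c₂ hc₂
              have hzc : z ∈ c.support := (hsup z hz).1
              rcases hzmem.1 with ⟨hzS', hznv⟩ | hzu
              · refine havoid z hzc ⟨hzS', fun hh => ?_⟩
                rw [Set.mem_singleton_iff] at hh
                exact hzmem.2 (hh ▸ rfl)
              · exact huc ((Set.mem_singleton_iff.1 hzu) ▸ hzc)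
            · -- x'.1 = u : use private cycle of v
              rw [Set.mem_singleton_iff] at hx'u
              have hnot := hminS v hvS
              rw [MMFVSAux.isFVS_iff_cycles] at hnot
              push_neg at hnot
              obtain ⟨x₀, c, hc, havoid⟩ := hnot
              obtain ⟨y, c₂, hc₂, hsup⟩ := projL c hc
              obtain ⟨z, hz, hzmem⟩ := hcon y c₂ hc₂
              have hzc : z ∈ c.support := (hsup z hz).1
              rcases hzmem.1 with ⟨hzS', hznv⟩ | hzu
              · exact havoid z hzc ⟨hzS', hznv⟩
              · exact hzmem.2 (by rw [Set.mem_singleton_iff] at hzu ⊢; rw [hzu, hx'u])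
        · -- cardinality
          have hpre : (Subtype.val ⁻¹' T : Set {x : V // x ≠ v}).ncard = T.ncard := by
            conv_rhs => rw [← himg T hvT]
            rw [Set.ncard_image_of_injective _ Subtype.val_injective]
          rw [hpre, hT]
          have h1 : (S \ {v} ∪ {u}) = insert u (S \ {v}) := by
            ext z
            simp [or_comm]
          rw [h1, Set.ncard_insert_of_notMem (fun h => huS h.1) ((S \ {v}).toFinite)]
          rw [Set.ncard_diff_singleton_of_mem hvS]
          have hpos : 0 < S.ncard := (Set.ncard_pos S.toFinite).2 ⟨v, hvS⟩
          omega
      · -- v ∉ S : use S itself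
        refine ⟨Subtype.val ⁻¹' S, ?_, ?_⟩
        · rw [MMFVSAux.isMinFVS_iff]
          constructor
          · rw [MMFVSAux.isFVS_contract_iff, himg S hvS]
            intro y c₂ hc₂
            by_contra hno
            push_neg at hno
            obtain ⟨x', c, hc, hsup⟩ := liftL c₂ hc₂
            obtain ⟨z, hzc, hzS⟩ := hfvsC x' c hc
            rcases hsup z hzc with hz | ⟨rfl, -⟩
            · exact hno z hz hzS
            · exact hvS hzS
          · intro x' hx'
            rw [MMFVSAux.isFVS_contract_iff, hdiffimg, himg S hvS]
            intro hcon
            have hnot := hminS x'.1 hx'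
            rw [MMFVSAux.isFVS_iff_cycles] at hnot
            push_neg at hnot
            obtain ⟨x₀, c, hc, havoid⟩ := hnot
            obtain ⟨y, c₂, hc₂, hsup⟩ := projL c hc
            obtain ⟨z, hz, hzmem⟩ := hcon y c₂ hc₂
            exact havoid z (hsup z hz).1 hzmem
        · have hpre : (Subtype.val ⁻¹' S : Set {x : V // x ≠ v}).ncard = S.ncard := by
            conv_rhs => rw [← himg S hvS]
            rw [Set.ncard_image_of_injective _ Subtype.val_injective]
          exact hpre
  unfold mmfvs
  exact congrArg sSup hKeq
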